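/- Let a > 0, b > 0. For all t > 0 and x > 0, with r(t,x,y) = (x/(y t)) · ((b + a y²)/(b + a x²)) · e^{−(x+y)/t} I₂(2√(xy)/t), one has ∫_0^∞ r(t,x,y) dy = 1 − e^{−x/t} · b(t+x)/(t(b + a x²)). -/

import Mathlib

open Real MeasureTheory

/-- The modified Bessel function of the first kind,
`I_ν(z) = ∑_{k=0}^∞ (z/2)^{2k+ν} / (k! Γ(k+ν+1))`. -/
noncomputable def besselI (ν z : ℝ) : ℝ :=
  ∑' k : ℕ, (z / 2) ^ (2 * (k : ℝ) + ν) / ((Nat.factorial k : ℝ) * Real.Gamma ((k : ℝ) + ν + 1))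

lemma aux_integrable (n : ℕ) {t : ℝ} (ht : 0 < t) :
    IntegrableOn (fun y : ℝ => y ^ n * Real.exp (-(t⁻¹ * y))) (Set.Ioi 0) := by
  have h := integrableOn_rpow_mul_exp_neg_mul_rpow (p := 1) (s := (n : ℝ)) (b := t⁻¹)
    (lt_of_lt_of_le neg_one_lt_zero (Nat.cast_nonneg n)) one_pos (by positivity)
  refine h.congr_fun (fun y hy => ?_) measurableSet_Ioi
  simp only [Real.rpow_one, Real.rpow_natCast, neg_mul]

lemma aux_integral (n : ℕ) {t : ℝ} (ht : 0 < t) :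
    ∫ y in Set.Ioi (0:ℝ), y ^ n * Real.exp (-(t⁻¹ * y))
      = (n.factorial : ℝ) * t ^ (n + 1) := by
  have h := Real.integral_rpow_mul_exp_neg_mul_Ioi (a := (n:ℝ)+1) (r := t⁻¹)
    (by positivity) (by positivity)
  rw [show (1 / t⁻¹ : ℝ) = t by field_simp] at h
  rw [show ((n:ℝ)+1) = ((n+1:ℕ):ℝ) by push_cast; ring, Real.rpow_natCast,
      show ((n+1:ℕ):ℝ) = (n:ℝ)+1 by push_cast; ring, Real.Gamma_nat_eq_factorial] at h
  rw [show ((n.factorial:ℝ) * t^(n+1)) = t^(n+1) * n.factorial by ring, ← h]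
  refine setIntegral_congr_fun measurableSet_Ioi (fun y hy => ?_)
  rw [show ((n:ℝ)+1-1) = ((n:ℕ):ℝ) by ring, Real.rpow_natCast]

lemma besselI_two (z : ℝ) :
    besselI 2 z = ∑' k : ℕ, (z/2)^(2*k+2) / ((k.factorial : ℝ) * ((k+2).factorial : ℝ)) := by
  unfold besselI
  congr 1; funext k
  rw [show ((k:ℝ) + 2 + 1) = ((k+2 : ℕ):ℝ) + 1 by push_cast; ring,
    Real.Gamma_nat_eq_factorial,
    show (2*(k:ℝ)+2) = ((2*k+2 : ℕ):ℝ) by push_cast; ring,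
    Real.rpow_natCast]

/-- The identity (3.19): the smooth part `r(t,x,y)` of the fundamental
solution (3.18) of `u_t = x u_xx + (3 - 4b/(b+ax²)) u_x` integrates to
`1 - e^{-x/t} b(t+x)/(t(b+ax²))`. -/
theorem stmt_6 (a b t x : ℝ) (ha : 0 < a) (hb : 0 < b) (ht : 0 < t) (hx : 0 < x)
    (r : ℝ → ℝ)
    (hr : ∀ y, r y = (x / (y * t)) * ((b + a * y ^ 2) / (b + a * x ^ 2))
        * Real.exp (-(x + y) / t) * besselI 2 (2 * Real.sqrt (x * y) / t)) :
    (∫ y in Set.Ioi (0 : ℝ), r y)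
      = 1 - Real.exp (-x / t) * (b * (t + x) / (t * (b + a * x ^ 2))) := by
  have hc : (0:ℝ) < b + a * x ^ 2 := by positivity
  set F : ℕ → ℝ → ℝ := fun k y =>
    (x ^ (k+2) * Real.exp (-x/t) /
      (t ^ (2*k+3) * ((k.factorial : ℝ) * ((k+2).factorial : ℝ)) * (b + a * x ^ 2)))
      * (y ^ k * Real.exp (-(t⁻¹ * y)) * (b + a * y ^ 2)) with hF
  -- pointwise expansion
  have step1 : ∀ y ∈ Set.Ioi (0:ℝ), r y = ∑' k, F k y := by
    intro y hy
    have hy0 : 0 < y := hy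
    rw [hr y, besselI_two]
    rw [show (2 * Real.sqrt (x*y) / t / 2) = Real.sqrt (x*y)/t by ring]
    rw [← tsum_mul_left]
    congr 1; funext k
    have hs2 : (Real.sqrt (x*y))^(2*k+2) = (x*y)^(k+1) := by
      rw [show 2*k+2 = 2*(k+1) by ring, pow_mul, Real.sq_sqrt (by positivity)]
    have hexp : Real.exp (-(x+y)/t) = Real.exp (-x/t) * Real.exp (-(t⁻¹*y)) := by
      rw [← Real.exp_add]; congr 1; field_simp; ring
    rw [div_pow, hs2, hexp, hF]
    have hk1 : ((k.factorial : ℝ)) ≠ 0 := Nat.cast_ne_zero.mpr k.factorial_ne_zero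
    have hk2 : (((k+2).factorial : ℝ)) ≠ 0 := Nat.cast_ne_zero.mpr (k+2).factorial_ne_zero
    field_simp
    ring
  -- integrability of each term
  have step2 : ∀ k : ℕ, IntegrableOn (F k) (Set.Ioi 0) := by
    intro k
    have heq : F k = fun y =>
        (x ^ (k+2) * Real.exp (-x/t) /
          (t ^ (2*k+3) * ((k.factorial : ℝ) * ((k+2).factorial : ℝ)) * (b + a * x ^ 2)))
        * (b * (y ^ k * Real.exp (-(t⁻¹ * y))) + a * (y ^ (k+2) * Real.exp (-(t⁻¹ * y)))) := by
      funext y; rw [hF]; ring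
    rw [heq]
    exact (((aux_integrable k ht).const_mul b).add
      ((aux_integrable (k+2) ht).const_mul a)).const_mul _
  -- value of each term's integral
  have step3 : ∀ k : ℕ, (∫ y in Set.Ioi (0:ℝ), F k y)
      = (b * Real.exp (-x/t) / (b + a * x ^ 2)) * ((x/t)^(k+2) / ((k+2).factorial : ℝ))
        + (a * x^2 * Real.exp (-x/t) / (b + a * x ^ 2)) * ((x/t)^k / (k.factorial : ℝ)) := by
    intro k
    have heq : ∀ y : ℝ, F k y =
        (x ^ (k+2) * Real.exp (-x/t) /
          (t ^ (2*k+3) * ((k.factorial : ℝ) * ((k+2).factorial : ℝ)) * (b + a * x ^ 2)))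
        * (b * (y ^ k * Real.exp (-(t⁻¹ * y))) + a * (y ^ (k+2) * Real.exp (-(t⁻¹ * y)))) := by
      intro y; rw [hF]; ring
    simp_rw [heq]
    rw [integral_const_mul, integral_add (((aux_integrable k ht).const_mul b))
      ((aux_integrable (k+2) ht).const_mul a), integral_const_mul, integral_const_mul,
      aux_integral k ht, aux_integral (k+2) ht]
    have hk1 : ((k.factorial : ℝ)) ≠ 0 := Nat.cast_ne_zero.mpr k.factorial_ne_zero
    have hk2 : (((k+2).factorial : ℝ)) ≠ 0 := Nat.cast_ne_zero.mpr (k+2).factorial_ne_zero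
    field_simp
    ring_nf
    simp only [inv_pow]
    field_simp
    ring
  -- summability of the term integrals
  have hsumP : Summable (fun k : ℕ =>
      (b * Real.exp (-x/t) / (b + a * x ^ 2)) * ((x/t)^(k+2) / ((k+2).factorial : ℝ))) :=
    ((summable_nat_add_iff 2).mpr (Real.summable_pow_div_factorial (x/t))).mul_left _
  have hsumQ : Summable (fun k : ℕ =>
      (a * x^2 * Real.exp (-x/t) / (b + a * x ^ 2)) * ((x/t)^k / (k.factorial : ℝ))) :=
    (Real.summable_pow_div_factorial (x/t)).mul_left _
  have hsumA := hsumP.add hsumQ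
  have hnormeq : (fun k : ℕ => ∫ y in Set.Ioi (0:ℝ), ‖F k y‖)
      = fun k : ℕ =>
      (b * Real.exp (-x/t) / (b + a * x ^ 2)) * ((x/t)^(k+2) / ((k+2).factorial : ℝ))
        + (a * x^2 * Real.exp (-x/t) / (b + a * x ^ 2)) * ((x/t)^k / (k.factorial : ℝ)) := by
    funext k
    rw [← step3 k]
    refine setIntegral_congr_fun measurableSet_Ioi (fun y hy => ?_)
    have hy0 : (0:ℝ) < y := hy
    refine Real.norm_of_nonneg ?_
    rw [hF]
    positivity
  have hswap : (∫ y in Set.Ioi (0:ℝ), ∑' k, F k y) = ∑' k, ∫ y in Set.Ioi (0:ℝ), F k y := by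
    refine (MeasureTheory.integral_tsum_of_summable_integral_norm step2 ?_).symm
    rw [hnormeq]; exact hsumA
  rw [setIntegral_congr_fun measurableSet_Ioi step1, hswap]
  simp_rw [step3]
  rw [Summable.tsum_add hsumP hsumQ, tsum_mul_left, tsum_mul_left]
  -- evaluate the two exponential series
  have hexp : ∀ u : ℝ, ∑' n : ℕ, u^n / (n.factorial : ℝ) = Real.exp u := by
    intro u
    rw [Real.exp_eq_exp_ℝ, NormedSpace.exp_eq_tsum_div]
  have htail : ∑' k : ℕ, (x/t)^(k+2) / ((k+2).factorial : ℝ)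
      = Real.exp (x/t) - 1 - (x/t) := by
    have h2 := Summable.sum_add_tsum_nat_add 2 (Real.summable_pow_div_factorial (x/t))
    rw [hexp (x/t)] at h2
    simp [Finset.sum_range_succ] at h2
    linarith
  rw [htail, hexp (x/t)]
  have hE : Real.exp (-x/t) * Real.exp (x/t) = 1 := by
    rw [← Real.exp_add, show (-x/t + x/t) = 0 by ring, Real.exp_zero]
  have hEne : Real.exp (x/t) ≠ 0 := Real.exp_ne_zero _
  have hEneg : Real.exp (-x/t) = (Real.exp (x/t))⁻¹ := by
    rw [neg_div, Real.exp_neg]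
  rw [hEneg]
  field_simp
  ring
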